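/- arXiv:1105.0600 — 2 statements merged into one kernel-verified Lean document; each statement's English description precedes it below -/
import Mathlib

section
/- Every autoreduced subset of the differential polynomial ring k{X} in finitely many differential indeterminates over a differential field is finite. -/
open MvPolynomial

/-- The algebraic indeterminates `θX_i` of the differential polynomial ring in `n`
differential indeterminates with `m` commuting derivations: a pair of the index `i`
and the multi-exponent of the derivation operator `θ`. -/
abbrev DVar (m n : ℕ) := Fin n × (Fin m →₀ ℕ)

/-- The order of a derivation operator (multi-exponent). -/
def opOrder {m : ℕ} (e : Fin m →₀ ℕ) : ℕ := e.sum fun _ k => k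

/-- Lexicographic comparison of derivation multi-exponents. -/
def expLexLt {m : ℕ} (e f : Fin m →₀ ℕ) : Prop :=
  ∃ j : Fin m, e j < f j ∧ ∀ j' : Fin m, j' < j → e j' = f j'

/-- The ranking of the algebraic indeterminates:
`δ^e X_i < δ^f X_j` iff `(Σe, i, e) < (Σf, j, f)` lexicographically. -/
def varLt {m n : ℕ} (v w : DVar m n) : Prop :=
  opOrder v.2 < opOrder w.2 ∨
    (opOrder v.2 = opOrder w.2 ∧
      (v.1 < w.1 ∨ (v.1 = w.1 ∧ expLexLt v.2 w.2)))

variable {m n : ℕ} {k : Type} [CommRing k]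

/-- `v` is the leader of the differential polynomial `f`: it occurs in `f` and every other
indeterminate occurring in `f` has strictly lower rank.  (Constants have no leader.) -/
def IsLeader (f : MvPolynomial (DVar m n) k) (v : DVar m n) : Prop :=
  v ∈ f.vars ∧ ∀ w ∈ f.vars, w ≠ v → varLt w v

/-- `rankLt f g`: the rank of `f` (the pair (leader, degree in the leader), with constants
ranked lowest) is strictly smaller than the rank of `g`. -/
def rankLt (f g : MvPolynomial (DVar m n) k) : Prop :=
  ((∀ v, ¬ IsLeader f v) ∧ ∃ w, IsLeader g w) ∨
  (∃ v, IsLeader f v ∧ IsLeader g v ∧ degreeOf v f < degreeOf v g) ∨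
  (∃ v w, IsLeader f v ∧ IsLeader g w ∧ varLt v w)

/-- `f` and `g` have the same rank. -/
def rankEq (f g : MvPolynomial (DVar m n) k) : Prop :=
  ((∀ v, ¬ IsLeader f v) ∧ ∀ v, ¬ IsLeader g v) ∨
  (∃ v, IsLeader f v ∧ IsLeader g v ∧ degreeOf v f = degreeOf v g)

/-- The coefficient of the highest power of the variable `v` in `f`
(the initial of `f` when `v` is the leader of `f`). -/
noncomputable def initialAt (v : DVar m n) (f : MvPolynomial (DVar m n) k) :
    MvPolynomial (DVar m n) k :=
  ∑ μ ∈ f.support.filter (fun μ => μ v = degreeOf v f),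
    monomial (μ.erase v) (coeff μ f)

/-- `u` is a proper derivative of the indeterminate `w`. -/
def IsProperDerivOf (w u : DVar m n) : Prop :=
  u.1 = w.1 ∧ w.2 ≤ u.2 ∧ u.2 ≠ w.2

/-- `f` is reduced with respect to `g`: no proper derivative of the leader of `g` occurs
in `f`, and the degree of `f` in the leader of `g` is smaller than that of `g`. -/
def ReducedWrt (f g : MvPolynomial (DVar m n) k) : Prop :=
  ∀ v, IsLeader g v →
    (∀ u ∈ f.vars, ¬ IsProperDerivOf v u) ∧ degreeOf v f < degreeOf v g

/-- A set of differential polynomials is autoreduced if each element is reduced with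
respect to every other element. -/
def Autoreduced (Λ : Set (MvPolynomial (DVar m n) k)) : Prop :=
  ∀ f ∈ Λ, ∀ g ∈ Λ, f ≠ g → ReducedWrt f g

/-- The extension of the derivation `δ_j` (given by `d j` on coefficients) to the
differential polynomial ring. -/
noncomputable def diffD (d : Fin m → k → k) (j : Fin m)
    (p : MvPolynomial (DVar m n) k) : MvPolynomial (DVar m n) k :=
  (∑ μ ∈ p.support, monomial μ (d j (coeff μ p))) +
    ∑ᶠ v : DVar m n, pderiv v p * X (v.1, v.2 + Finsupp.single j 1)


/-- Every autoreduced subset of the differential polynomial ring `k{X}` in finitely many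
differential indeterminates over a differential field is finite.  (Here, following Kolchin,
the members of an autoreduced set are required to be nonconstant, i.e. to have a leader.) -/
theorem autoreduced_finite {m n : ℕ} {k : Type} [Field k] [CharZero k]
    (Λ : Set (MvPolynomial (DVar m n) k))
    (hnc : ∀ f ∈ Λ, ∃ v, IsLeader f v)
    (hred : Autoreduced Λ) :
    Λ.Finite := by
  classical
  -- The leader of each element of Λ
  let L : Λ → DVar m n := fun f => (hnc f f.2).choose
  have hL : ∀ f : Λ, IsLeader (f : MvPolynomial (DVar m n) k) (L f) :=
    fun f => (hnc f f.2).choose_spec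
  -- L is injective
  have hLinj : Function.Injective L := by
    intro f g hfg
    by_contra hne
    have hne' : (f : MvPolynomial (DVar m n) k) ≠ g := fun h => hne (Subtype.ext h)
    have h1 := (hred f f.2 g g.2 hne' (L g) (hL g)).2
    have h2 := (hred g g.2 f f.2 (Ne.symm hne') (L f) (hL f)).2
    rw [hfg] at h2
    exact absurd (h1.trans h2) (lt_irrefl _)
  -- fibers of the leader set over `Fin n` are antichains
  have hanti : ∀ i : Fin n,
      IsAntichain (· ≤ ·) {e : Fin m →₀ ℕ | (i, e) ∈ Set.range L} := by
    intro i e he f hf hef hle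
    obtain ⟨a, ha⟩ := he
    obtain ⟨b, hb⟩ := hf
    have hab : a ≠ b := by
      rintro rfl
      rw [ha] at hb
      exact hef (congrArg Prod.snd hb)
    have hab' : (a : MvPolynomial (DVar m n) k) ≠ b := fun h => hab (Subtype.ext h)
    -- b is reduced w.r.t. a, whose leader is (i, e); but (i, f) ∈ b.vars
    have hred1 := (hred b b.2 a a.2 (Ne.symm hab') (L a) (hL a)).1
    have hmem : (i, f) ∈ (b : MvPolynomial (DVar m n) k).vars := by
      have := (hL b).1
      rwa [hb] at this
    refine hred1 (i, f) hmem ?_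
    rw [ha]
    exact ⟨rfl, hle, fun h => hef h.symm⟩
  have hfib : ∀ i : Fin n, {e : Fin m →₀ ℕ | (i, e) ∈ Set.range L}.Finite := fun i =>
    (hanti i).finite_of_partiallyWellOrderedOn (Set.isPWO_of_wellQuasiOrderedLE _)
  have hrange : (Set.range L).Finite := by
    have hsub : Set.range L ⊆
        ⋃ i : Fin n, (fun e => (i, e)) '' {e : Fin m →₀ ℕ | (i, e) ∈ Set.range L} := by
      rintro ⟨i, e⟩ ⟨a, ha⟩
      exact Set.mem_iUnion.2 ⟨i, ⟨e, ⟨a, ha⟩, rfl⟩⟩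
    exact Set.Finite.subset (Set.finite_iUnion fun i => (hfib i).image _) hsub
  haveI : Finite (Set.range L) := hrange
  haveI : Finite Λ := Finite.of_injective
    (fun f => (⟨L f, Set.mem_range_self f⟩ : Set.range L))
    (fun a b h => hLinj (congrArg Subtype.val h))
  exact Set.toFinite Λ
end

section
/- Let K = ∏_𝒰 K_r be an ultraproduct of fields and K[Z]_int = ∏_𝒰 K_r[Z] the internal polynomial ring in countably many variables, viewed as an extension of K[Z]. For any ideal I of K[Z] and any g ∈ K[Z]: if g^N lies in the extension I·K[Z]_int for some internal natural number N ∈ ℕ*, then g lies in the radical √I of I in K[Z]. -/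
open Filter

variable {ι : Type} (𝒰 : Ultrafilter ι)

/-- The setoid identifying `ι`-indexed families agreeing almost everywhere w.r.t. `𝒰`. -/
def upSetoid (R : ι → Type) : Setoid (∀ i, R i) where
  r a b := ∀ᶠ i in (𝒰 : Filter ι), a i = b i
  iseqv := ⟨fun _ => Eventually.of_forall fun _ => rfl,
    fun h => h.mono fun _ e => e.symm,
    fun h1 h2 => h2.mp (h1.mono fun _ e1 e2 => e1.trans e2)⟩

/-- The ultraproduct `∏_𝒰 R i`. -/
def UProd (R : ι → Type) : Type := Quotient (upSetoid 𝒰 R)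

/-- The class of the family `a` in the ultraproduct. -/
def UProd.mk {R : ι → Type} (a : ∀ i, R i) : UProd 𝒰 R := Quotient.mk (upSetoid 𝒰 R) a

variable (R : ι → Type) [∀ i, CommRing (R i)]

instance : Zero (UProd 𝒰 R) := ⟨UProd.mk 𝒰 fun _ => 0⟩
instance : One (UProd 𝒰 R) := ⟨UProd.mk 𝒰 fun _ => 1⟩

instance : Add (UProd 𝒰 R) :=
  ⟨Quotient.map₂ (fun a b i => a i + b i) (by
    intro a a' ha b b' hb
    exact (ha.and hb).mono fun i ⟨h1, h2⟩ => by simp only [h1, h2])⟩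

instance : Mul (UProd 𝒰 R) :=
  ⟨Quotient.map₂ (fun a b i => a i * b i) (by
    intro a a' ha b b' hb
    exact (ha.and hb).mono fun i ⟨h1, h2⟩ => by simp only [h1, h2])⟩

instance : Neg (UProd 𝒰 R) :=
  ⟨Quotient.map (fun a i => - a i) (by
    intro a a' ha
    exact ha.mono fun i h1 => by simp only [h1])⟩

/-- The ultraproduct of commutative rings is a commutative ring (coordinatewise a.e.). -/
instance instCommRingUProd : CommRing (UProd 𝒰 R) where
  add := (· + ·)
  mul := (· * ·)
  neg := (- ·)
  zero := 0
  one := 1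
  add_assoc := by
    rintro ⟨a⟩ ⟨b⟩ ⟨c⟩
    exact Quotient.sound (Eventually.of_forall fun i => add_assoc _ _ _)
  zero_add := by
    rintro ⟨a⟩
    exact Quotient.sound (Eventually.of_forall fun i => zero_add _)
  add_zero := by
    rintro ⟨a⟩
    exact Quotient.sound (Eventually.of_forall fun i => add_zero _)
  add_comm := by
    rintro ⟨a⟩ ⟨b⟩
    exact Quotient.sound (Eventually.of_forall fun i => add_comm _ _)
  mul_assoc := by
    rintro ⟨a⟩ ⟨b⟩ ⟨c⟩
    exact Quotient.sound (Eventually.of_forall fun i => mul_assoc _ _ _)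
  one_mul := by
    rintro ⟨a⟩
    exact Quotient.sound (Eventually.of_forall fun i => one_mul _)
  mul_one := by
    rintro ⟨a⟩
    exact Quotient.sound (Eventually.of_forall fun i => mul_one _)
  zero_mul := by
    rintro ⟨a⟩
    exact Quotient.sound (Eventually.of_forall fun i => zero_mul _)
  mul_zero := by
    rintro ⟨a⟩
    exact Quotient.sound (Eventually.of_forall fun i => mul_zero _)
  left_distrib := by
    rintro ⟨a⟩ ⟨b⟩ ⟨c⟩
    exact Quotient.sound (Eventually.of_forall fun i => left_distrib _ _ _)
  right_distrib := by
    rintro ⟨a⟩ ⟨b⟩ ⟨c⟩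
    exact Quotient.sound (Eventually.of_forall fun i => right_distrib _ _ _)
  mul_comm := by
    rintro ⟨a⟩ ⟨b⟩
    exact Quotient.sound (Eventually.of_forall fun i => mul_comm _ _)
  neg_add_cancel := by
    rintro ⟨a⟩
    exact Quotient.sound (Eventually.of_forall fun i => neg_add_cancel _)
  nsmul := nsmulRec
  zsmul := zsmulRec

/-- The internal subset of the ultraproduct with components `A i`: an element belongs to it
iff its coordinates belong to the components almost everywhere. -/
def internalSet (A : ∀ i, Set (R i)) : Set (UProd 𝒰 R) :=
  {x | Quotient.liftOn x (fun a => ∀ᶠ i in (𝒰 : Filter ι), a i ∈ A i)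
    (fun a b hab => propext
      ⟨fun h => (hab.and h).mono fun _ ⟨e, hi⟩ => e ▸ hi,
       fun h => (hab.and h).mono fun _ ⟨e, hi⟩ => e ▸ hi⟩)}

variable (K : ι → Type) [∀ i, Field (K i)]

/-- The coordinatewise constants map from the ultraproduct field `K = ∏_𝒰 K i` into the
internal polynomial ring `∏_𝒰 K i[Z]`. -/
noncomputable def constHom : UProd 𝒰 K →+* UProd 𝒰 (fun i => MvPolynomial ℕ (K i)) where
  toFun := Quotient.map (fun a i => MvPolynomial.C (a i))
    (fun a b hab => hab.mono fun i e => by simp only [e])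
  map_one' := Quotient.sound (Eventually.of_forall fun i => by simp)
  map_zero' := Quotient.sound (Eventually.of_forall fun i => by simp)
  map_mul' := by
    rintro ⟨a⟩ ⟨b⟩
    exact Quotient.sound (Eventually.of_forall fun i => by simp)
  map_add' := by
    rintro ⟨a⟩ ⟨b⟩
    exact Quotient.sound (Eventually.of_forall fun i => by simp)

/-- The natural embedding of the polynomial ring `K[Z_i : i < ω]` over the ultraproduct
field `K = ∏_𝒰 K i` into the internal polynomial ring `∏_𝒰 K i[Z_j : j < ω]`, obtained by
unpacking the coefficients coordinatewise (it sends constants to coordinatewise constants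
and each variable `Z_j` to the corresponding internal variable). -/
noncomputable def upPolyEmb :
    MvPolynomial ℕ (UProd 𝒰 K) →+* UProd 𝒰 (fun i => MvPolynomial ℕ (K i)) :=
  MvPolynomial.eval₂Hom (constHom 𝒰 K) (fun j => UProd.mk 𝒰 fun _ => MvPolynomial.X j)


set_option linter.unusedSectionVars false

namespace UProd
variable {𝒰} {R}

theorem mk_eq_mk {a b : ∀ i, R i} :
    UProd.mk 𝒰 a = UProd.mk 𝒰 b ↔ ∀ᶠ i in (𝒰 : Filter ι), a i = b i :=
  ⟨fun h => Quotient.exact h, fun h => Quotient.sound (h : (upSetoid 𝒰 R).r a b)⟩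

theorem mk_out (x : UProd 𝒰 R) : UProd.mk 𝒰 (Quotient.out x) = x := Quotient.out_eq x

theorem out_mk (a : ∀ i, R i) :
    ∀ᶠ i in (𝒰 : Filter ι), Quotient.out (UProd.mk 𝒰 a) i = a i :=
  Quotient.exact (Quotient.out_eq (UProd.mk 𝒰 a))

theorem mk_zero : (0 : UProd 𝒰 R) = UProd.mk 𝒰 (fun _ => 0) := rfl
theorem mk_one : (1 : UProd 𝒰 R) = UProd.mk 𝒰 (fun _ => 1) := rfl

theorem mk_add (a b : ∀ i, R i) :
    UProd.mk 𝒰 a + UProd.mk 𝒰 b = UProd.mk 𝒰 (fun i => a i + b i) := rfl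

theorem mk_mul (a b : ∀ i, R i) :
    UProd.mk 𝒰 a * UProd.mk 𝒰 b = UProd.mk 𝒰 (fun i => a i * b i) := rfl

theorem mk_pow (a : ∀ i, R i) (n : ℕ) :
    (UProd.mk 𝒰 a) ^ n = UProd.mk 𝒰 (fun i => a i ^ n) := by
  induction n with
  | zero => simp [mk_one, pow_zero]
  | succ n ih =>
    rw [pow_succ, ih, mk_mul]
    exact congrArg _ (funext fun i => (pow_succ _ _).symm)

theorem mk_sum {α : Type*} (s : Finset α) (f : α → ∀ i, R i) :
    (∑ y ∈ s, UProd.mk 𝒰 (f y)) = UProd.mk 𝒰 (fun i => ∑ y ∈ s, f y i) := by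
  classical
  induction s using Finset.induction with
  | empty => simp [mk_zero]
  | insert _ _ hx ih =>
    rw [Finset.sum_insert hx, ih, mk_add]
    exact congrArg _ (funext fun i => by rw [Finset.sum_insert hx])

end UProd

section FieldUProd
variable {F : ι → Type} [∀ i, Field (F i)]

/-- The ultraproduct of fields is a field. -/
noncomputable def uprodField : Field (UProd 𝒰 F) where
  __ := instCommRingUProd 𝒰 F
  inv := Quotient.map (fun a i => (a i)⁻¹) (by
    intro a b hab
    exact hab.mono fun i h => by simp only [h])
  exists_pair_ne := by
    refine ⟨0, 1, fun h => ?_⟩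
    have h2 : ∀ᶠ i in (𝒰 : Filter ι), (0 : F i) = 1 := UProd.mk_eq_mk.1 h
    rcases h2.exists with ⟨i, hi⟩
    exact zero_ne_one hi
  mul_inv_cancel := by
    rintro ⟨a⟩ ha
    have hne : ¬ ∀ᶠ i in (𝒰 : Filter ι), a i = 0 := fun h => ha (Quotient.sound h)
    have h2 : ∀ᶠ i in (𝒰 : Filter ι), a i ≠ 0 :=
      (Ultrafilter.eventually_or.mp (Eventually.of_forall fun i => em (a i = 0))).resolve_left hne
    exact Quotient.sound (h2.mono fun i h => mul_inv_cancel₀ h)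
  inv_zero := Quotient.sound (Eventually.of_forall fun i => inv_zero)
  nnqsmul := _
  qsmul := _

attribute [reducible] uprodField

end FieldUProd


section AlgClosed
open Polynomial in
theorem uprodField_isAlgClosed {F : ι → Type} [∀ i, Field (F i)] [∀ i, IsAlgClosed (F i)] :
    letI : Field (UProd 𝒰 F) := uprodField 𝒰
    IsAlgClosed (UProd 𝒰 F) := by
  letI : Field (UProd 𝒰 F) := uprodField 𝒰
  apply IsAlgClosed.of_exists_root
  intro p hmo hirr
  set n := p.natDegree with hn
  have hnpos : 0 < n := hirr.natDegree_pos
  -- coordinate polynomials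
  set q : ∀ i, Polynomial (F i) :=
    fun i => ∑ k ∈ Finset.range (n + 1), Polynomial.C (Quotient.out (p.coeff k) i) * Polynomial.X ^ k
    with hq
  have hcoeff : ∀ i k, (q i).coeff k = if k ∈ Finset.range (n + 1) then Quotient.out (p.coeff k) i else 0 := by
    intro i k
    rw [hq]
    simp only [Polynomial.finset_sum_coeff, Polynomial.coeff_C_mul, Polynomial.coeff_X_pow]
    simp only [mul_ite, mul_one, mul_zero]
    rw [Finset.sum_ite_eq (Finset.range (n+1)) k (fun x => Quotient.out (p.coeff x) i)]
  -- a.e. the leading coefficient is 1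
  have hlead : ∀ᶠ i in (𝒰 : Filter ι), Quotient.out (p.coeff n) i = 1 := by
    have h1 : p.coeff n = UProd.mk 𝒰 (fun _ => 1) := by
      rw [← UProd.mk_one]; exact hmo
    rw [h1]
    exact UProd.out_mk _
  -- a.e. existence of a root
  have hroot : ∀ᶠ i in (𝒰 : Filter ι), ∃ r, (q i).eval r = 0 := by
    refine hlead.mono fun i hi => ?_
    have hcn : (q i).coeff n ≠ 0 := by
      rw [hcoeff i n, if_pos (Finset.self_mem_range_succ n), hi]; exact one_ne_zero
    have hdeg : (q i).degree ≠ 0 := by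
      have h1 : 0 < (q i).natDegree :=
        lt_of_lt_of_le hnpos (Polynomial.le_natDegree_of_ne_zero hcn)
      exact ne_of_gt (Polynomial.natDegree_pos_iff_degree_pos.mp h1)
    obtain ⟨r, hr⟩ := IsAlgClosed.exists_root (q i) hdeg
    exact ⟨r, hr⟩
  classical
  set x : ∀ i, F i := fun i => if h : ∃ r, (q i).eval r = 0 then h.choose else 0 with hx
  refine ⟨UProd.mk 𝒰 x, ?_⟩
  have heval : p.eval (UProd.mk 𝒰 x) =
      UProd.mk 𝒰 (fun i => (q i).eval (x i)) := by
    rw [Polynomial.eval_eq_sum_range]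
    have : ∀ k, p.coeff k * (UProd.mk 𝒰 x) ^ k =
        UProd.mk 𝒰 (fun i => Quotient.out (p.coeff k) i * x i ^ k) := by
      intro k
      conv_lhs => rw [← UProd.mk_out (p.coeff k)]
      exact (congrArg (UProd.mk 𝒰 (Quotient.out (p.coeff k)) * ·) (UProd.mk_pow x k)).trans (UProd.mk_mul _ _)
    rw [Finset.sum_congr rfl (fun k _ => this k), UProd.mk_sum]
    refine congrArg _ (funext fun i => ?_)
    rw [hq]
    simp [Polynomial.eval_finset_sum]
    rfl
  rw [heval]
  rw [show (0 : UProd 𝒰 F) = UProd.mk 𝒰 (fun _ => 0) from rfl, UProd.mk_eq_mk]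
  refine hroot.mono fun i hi => ?_
  rw [hx]
  simp only [dif_pos hi]
  exact hi.choose_spec

end AlgClosed


section Contraction

variable {Kf Lf : Type*} [Field Kf] [Field Lf] [Algebra Kf Lf]

theorem exists_proj_algebraMap :
    ∃ π : Lf →ₗ[Kf] Kf, ∀ a : Kf, π (algebraMap Kf Lf a) = a := by
  obtain ⟨q, hq⟩ := Submodule.exists_isCompl (Kf ∙ (1 : Lf))
  let pr := Submodule.linearProjOfIsCompl _ _ hq
  refine ⟨(LinearEquiv.coord Kf Lf 1 one_ne_zero).toLinearMap ∘ₗ pr, fun a => ?_⟩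
  have h1 : algebraMap Kf Lf a = a • (1 : Lf) := Algebra.algebraMap_eq_smul_one a
  have hmem : algebraMap Kf Lf a ∈ (Kf ∙ (1 : Lf)) := by
    rw [h1]; exact Submodule.smul_mem _ _ (Submodule.mem_span_singleton_self 1)
  have h2 : pr (algebraMap Kf Lf a) = ⟨algebraMap Kf Lf a, hmem⟩ :=
    Submodule.linearProjOfIsCompl_apply_left hq ⟨algebraMap Kf Lf a, hmem⟩
  simp only [LinearMap.comp_apply, h2, LinearEquiv.coe_coe]
  rw [LinearEquiv.symm_apply_eq]
  ext
  simp [h1]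

open MvPolynomial in
theorem mem_span_of_map_mem_span {Kc Lc : Type*} [CommRing Kc] [CommRing Lc]
    (χ : Kc →+* Lc) (π : Lc →+ Kc)
    (hπ1 : ∀ a, π (χ a) = a)
    (hπm : ∀ (x : Lc) (a : Kc), π (x * χ a) = π x * a)
    (S : Set (MvPolynomial ℕ Kc)) (h : MvPolynomial ℕ Kc)
    (hmem : MvPolynomial.map χ h ∈ Ideal.span (MvPolynomial.map χ '' S)) :
    h ∈ Ideal.span S := by
  classical
  rw [Ideal.span] at hmem ⊢
  obtain ⟨c, hsupp, hsum⟩ := Submodule.mem_span_set.mp hmem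
  have hchoice : ∀ y ∈ c.support, ∃ u ∈ S, MvPolynomial.map χ u = y :=
    fun y hy => hsupp hy
  choose u hu hmap using hchoice
  have key : h = ∑ y ∈ c.support.attach,
      (∑ d ∈ (c y.1).support, monomial d (π (coeff d (c y.1)))) * u y.1 y.2 := by
    apply MvPolynomial.ext
    intro d
    have h1 : coeff d (MvPolynomial.map χ h) = χ (coeff d h) := coeff_map _ _ _
    have h2 : coeff d h = π (coeff d (MvPolynomial.map χ h)) := by rw [h1, hπ1]
    rw [h2, ← hsum, Finsupp.sum]
    rw [← Finset.sum_attach c.support (fun y => c y • y)]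
    rw [MvPolynomial.coeff_sum, map_sum, MvPolynomial.coeff_sum]
    refine Finset.sum_congr rfl ?_
    rintro ⟨y, hy⟩ -
    rw [smul_eq_mul, MvPolynomial.coeff_mul, MvPolynomial.coeff_mul, map_sum]
    refine Finset.sum_congr rfl fun x _ => ?_
    have hco : coeff x.2 y = χ (coeff x.2 (u y hy)) := by
      conv_lhs => rw [← hmap y hy]
      rw [coeff_map]
    rw [hco, hπm]
    have hc : coeff x.1 (∑ d ∈ (c y).support, monomial d (π (coeff d (c y)))) =
        π (coeff x.1 (c y)) := by
      rw [MvPolynomial.coeff_sum]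
      simp only [MvPolynomial.coeff_monomial]
      rw [Finset.sum_ite_eq' (c y).support x.1 (fun d => π (coeff d (c y)))]
      split
      · rfl
      · next hns => rw [MvPolynomial.notMem_support_iff.mp hns, map_zero]
    rw [hc]
  rw [key]
  exact Submodule.sum_mem _ fun y _ =>
    Ideal.mul_mem_left _ _ (Submodule.subset_span (hu y.1 y.2))

end Contraction


section Witness
open MvPolynomial

theorem exists_point {L : Type} [Field L] [IsAlgClosed L]
    (T : Finset (MvPolynomial ℕ L)) (g : MvPolynomial ℕ L)
    (hg : g ∉ (Ideal.span (T : Set (MvPolynomial ℕ L))).radical) :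
    ∃ p : ℕ → L, (∀ f ∈ T, eval p f = 0) ∧ eval p g ≠ 0 := by
  classical
  set s : Finset ℕ := g.vars ∪ T.sup (fun f => f.vars) with hs
  haveI : Finite ↥(↑s : Set ℕ) := s.finite_toSet.to_subtype
  -- polynomials supported in s
  have hsupp : ∀ f ∈ T, f ∈ supported L (↑s : Set ℕ) := by
    intro f hf
    rw [mem_supported]
    refine subset_trans ?_ (Finset.coe_subset.mpr (Finset.subset_union_right))
    exact_mod_cast Finset.coe_subset.mpr (Finset.le_sup hf)
  have hgsupp : g ∈ supported L (↑s : Set ℕ) := by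
    rw [mem_supported]
    exact_mod_cast Finset.coe_subset.mpr (Finset.subset_union_left)
  rw [supported_eq_range_rename] at hsupp hgsupp
  obtain ⟨qg, hqg0⟩ := hgsupp
  have hqg : (rename ((↑) : (↑s : Set ℕ) → ℕ)) qg = g := hqg0
  have hch : ∀ f ∈ T, ∃ q, rename ((↑) : (↑s : Set ℕ) → ℕ) q = f := fun f hf => hsupp f hf
  choose qf hqf using hch
  set Q : Finset (MvPolynomial ↥(↑s : Set ℕ) L) := T.attach.image (fun f => qf f.1 f.2) with hQ
  -- qg is not in the radical downstairs
  have hqg_rad : qg ∉ (Ideal.span (Q : Set (MvPolynomial ↥(↑s : Set ℕ) L))).radical := by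
    intro hmem
    apply hg
    obtain ⟨M, hM⟩ := hmem
    refine ⟨M, ?_⟩
    have h1 : (rename ((↑) : (↑s : Set ℕ) → ℕ)) (qg ^ M) ∈
        Ideal.map (rename ((↑) : (↑s : Set ℕ) → ℕ)).toRingHom
          (Ideal.span (Q : Set (MvPolynomial ↥(↑s : Set ℕ) L))) :=
      Ideal.mem_map_of_mem _ hM
    rw [Ideal.map_span] at h1
    rw [map_pow, hqg] at h1
    refine Ideal.span_le.mpr ?_ h1
    rintro _ ⟨y, hy, rfl⟩
    simp only [hQ, Finset.mem_coe, Finset.mem_image, Finset.mem_attach, true_and] at hy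
    obtain ⟨⟨f, hf⟩, rfl⟩ := hy
    have h2 : (rename ((↑) : (↑s : Set ℕ) → ℕ)).toRingHom (qf f hf) = f := hqf f hf
    rw [h2]
    exact Ideal.subset_span (Finset.mem_coe.mpr hf)
  -- Nullstellensatz
  rw [← vanishingIdeal_zeroLocus_eq_radical (K := L), mem_vanishingIdeal_iff] at hqg_rad
  push_neg at hqg_rad
  obtain ⟨x, hxzero, hxg⟩ := hqg_rad
  -- extend the point
  set p : ℕ → L := fun j => if h : j ∈ s then x ⟨j, h⟩ else 0 with hp
  have hpev : ∀ q : MvPolynomial ↥(↑s : Set ℕ) L,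
      eval p (rename ((↑) : (↑s : Set ℕ) → ℕ) q) = eval x q := by
    intro q
    rw [eval_rename]
    have hpx : p ∘ (Subtype.val : (↑s : Set ℕ) → ℕ) = x := by
      funext j
      obtain ⟨j, hj⟩ := j
      have hj' : j ∈ s := hj
      simp only [Function.comp_apply, hp]
      rw [dif_pos hj']
    rw [hpx]
  refine ⟨p, fun f hf => ?_, ?_⟩
  · rw [← hqf f hf, hpev]
    refine (mem_zeroLocus_iff.mp hxzero) _ (Ideal.subset_span ?_)
    rw [hQ]
    simp only [Finset.mem_coe, Finset.mem_image, Finset.mem_attach, true_and]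
    exact ⟨⟨f, hf⟩, rfl⟩
  · rw [← hqg, hpev]
    exact hxg

end Witness


section UpHoms

variable {A B : ι → Type} [∀ i, CommRing (A i)] [∀ i, CommRing (B i)]

/-- A coordinatewise family of ring homs induces a ring hom of ultraproducts. -/
noncomputable def upRingHom (σ : ∀ i, A i →+* B i) : UProd 𝒰 A →+* UProd 𝒰 B where
  toFun := Quotient.map (fun a i => σ i (a i))
    (fun a b hab => hab.mono fun i h => by simp only [h])
  map_one' := Quotient.sound (Eventually.of_forall fun i => by simp)
  map_zero' := Quotient.sound (Eventually.of_forall fun i => by simp)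
  map_mul' := by
    rintro ⟨a⟩ ⟨b⟩
    exact Quotient.sound (Eventually.of_forall fun i => by simp)
  map_add' := by
    rintro ⟨a⟩ ⟨b⟩
    exact Quotient.sound (Eventually.of_forall fun i => by simp)

theorem upRingHom_mk (σ : ∀ i, A i →+* B i) (a : ∀ i, A i) :
    upRingHom 𝒰 σ (UProd.mk 𝒰 a) = UProd.mk 𝒰 (fun i => σ i (a i)) := rfl

/-- Coordinatewise evaluation of internal polynomials at an internal point, along a family
of coefficient ring homs. -/
noncomputable def upEval (σ : ∀ i, A i →+* B i) (q : ∀ i, ℕ → B i) :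
    UProd 𝒰 (fun i => MvPolynomial ℕ (A i)) →+* UProd 𝒰 B where
  toFun := Quotient.map (fun a i => MvPolynomial.eval₂ (σ i) (q i) (a i))
    (fun a b hab => hab.mono fun i h => by simp only [h])
  map_one' := Quotient.sound (Eventually.of_forall fun i => by simp)
  map_zero' := Quotient.sound (Eventually.of_forall fun i => by simp)
  map_mul' := by
    rintro ⟨a⟩ ⟨b⟩
    exact Quotient.sound (Eventually.of_forall fun i => by
      simp [MvPolynomial.eval₂_mul])
  map_add' := by
    rintro ⟨a⟩ ⟨b⟩
    exact Quotient.sound (Eventually.of_forall fun i => by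
      simp [MvPolynomial.eval₂_add])

theorem upEval_mk (σ : ∀ i, A i →+* B i) (q : ∀ i, ℕ → B i) (a : ∀ i, MvPolynomial ℕ (A i)) :
    upEval 𝒰 σ q (UProd.mk 𝒰 a) = UProd.mk 𝒰 (fun i => MvPolynomial.eval₂ (σ i) (q i) (a i)) :=
  rfl

end UpHoms


section Compat

variable {B : ι → Type} [∀ i, CommRing (B i)]

theorem upEval_upPolyEmb (σ : ∀ i, K i →+* B i) (q : ∀ i, ℕ → B i)
    (h : MvPolynomial ℕ (UProd 𝒰 K)) :
    upEval 𝒰 σ q (upPolyEmb 𝒰 K h) =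
      MvPolynomial.eval₂ (upRingHom 𝒰 σ) (fun j => UProd.mk 𝒰 (fun i => q i j)) h := by
  have : (upEval 𝒰 σ q).comp (upPolyEmb 𝒰 K) =
      MvPolynomial.eval₂Hom (upRingHom 𝒰 σ) (fun j => UProd.mk 𝒰 (fun i => q i j)) := by
    apply MvPolynomial.ringHom_ext
    · intro a
      obtain ⟨v, rfl⟩ := Quotient.exists_rep a
      show upEval 𝒰 σ q (upPolyEmb 𝒰 K (MvPolynomial.C (UProd.mk 𝒰 v))) = _
      rw [show upPolyEmb 𝒰 K (MvPolynomial.C (UProd.mk 𝒰 v)) =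
          UProd.mk 𝒰 (fun i => MvPolynomial.C (v i)) from by
        simp only [upPolyEmb, MvPolynomial.eval₂Hom_C]; rfl]
      rw [upEval_mk]
      simp only [MvPolynomial.eval₂Hom_C, MvPolynomial.eval₂_C]
      exact (MvPolynomial.eval₂_C (upRingHom 𝒰 σ) (fun j => UProd.mk 𝒰 (fun i => q i j)) (UProd.mk 𝒰 v)).symm
    · intro j
      show upEval 𝒰 σ q (upPolyEmb 𝒰 K (MvPolynomial.X j)) = _
      rw [show upPolyEmb 𝒰 K (MvPolynomial.X j) = UProd.mk 𝒰 (fun _ => MvPolynomial.X j) from by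
        simp only [upPolyEmb, MvPolynomial.eval₂Hom_X']]
      rw [upEval_mk]
      simp only [MvPolynomial.eval₂Hom_X', MvPolynomial.eval₂_X]
  calc upEval 𝒰 σ q (upPolyEmb 𝒰 K h)
      = ((upEval 𝒰 σ q).comp (upPolyEmb 𝒰 K)) h := rfl
    _ = _ := by rw [this]; rfl

end Compat

set_option maxHeartbeats 2000000 in
/-- Let `K = ∏_𝒰 K i` be an ultraproduct of fields and `K[Z]_int = ∏_𝒰 (K i)[Z]` the
internal polynomial ring in countably many variables, an extension of `K[Z]` via the
natural embedding `φ`.  For any ideal `I` of `K[Z]` and `g ∈ K[Z]`: if `g^N` lies in the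
extension `I·K[Z]_int` for some internal natural number `N ∈ ℕ*` (that is, the internal
element whose `i`-th coordinate is `(φ g)(i)^(N i)` lies in `I·K[Z]_int`), then `g` lies
in the radical `√I` of `I` in `K[Z]`. -/
theorem mem_radical_of_internal_pow_mem {ι : Type} (𝒰 : Ultrafilter ι)
    (hnp : ∀ i : ι, {i} ∉ (𝒰 : Filter ι))
    (K : ι → Type) [∀ i, Field (K i)]
    (I : Ideal (MvPolynomial ℕ (UProd 𝒰 K)))
    (g : MvPolynomial ℕ (UProd 𝒰 K))
    (N : ι → ℕ)
    (hpow : UProd.mk 𝒰 (fun i => (Quotient.out (upPolyEmb 𝒰 K g)) i ^ N i) ∈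
      I.map (upPolyEmb 𝒰 K)) :
    g ∈ I.radical := by
  classical
  by_contra hrad
  -- extract a finite combination from hpow
  rw [Ideal.map, Ideal.span] at hpow
  obtain ⟨c, hsupp, hsum⟩ := Submodule.mem_span_set.mp hpow
  have hch : ∀ y ∈ c.support, ∃ f ∈ I, upPolyEmb 𝒰 K f = y := fun y hy => hsupp hy
  choose F hFI hFmap using hch
  set T : Finset (MvPolynomial ℕ (UProd 𝒰 K)) := c.support.attach.image (fun y => F y.1 y.2)
    with hT
  have hTI : (T : Set (MvPolynomial ℕ (UProd 𝒰 K))) ⊆ I := by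
    rintro f hf
    simp only [hT, Finset.coe_image, Set.mem_image, Finset.mem_coe, Finset.mem_attach,
      true_and] at hf
    obtain ⟨⟨y, hy⟩, _, rfl⟩ := hf
    exact hFI y hy
  have hgT : g ∉ (Ideal.span (T : Set (MvPolynomial ℕ (UProd 𝒰 K)))).radical := fun hmem =>
    hrad (Ideal.radical_mono (Ideal.span_le.mpr hTI) hmem)
  -- set up the algebraically closed ultraproduct field
  set Lf : ι → Type := fun i => AlgebraicClosure (K i) with hLf
  letI : Field (UProd 𝒰 Lf) := uprodField 𝒰
  haveI : IsAlgClosed (UProd 𝒰 Lf) := uprodField_isAlgClosed 𝒰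
  set σ : ∀ i, K i →+* Lf i := fun i => algebraMap (K i) (AlgebraicClosure (K i)) with hσ
  set χ : UProd 𝒰 K →+* UProd 𝒰 Lf := upRingHom 𝒰 σ with hχ
  -- a coordinatewise projection back onto K
  have hproj : ∀ i, ∃ π : Lf i →ₗ[K i] K i, ∀ a, π (algebraMap (K i) (Lf i) a) = a :=
    fun i => exists_proj_algebraMap
  choose πf hπf using hproj
  set Pj : UProd 𝒰 Lf →+ UProd 𝒰 K :=
    { toFun := Quotient.map (fun b i => πf i (b i))
        (fun a b hab => hab.mono fun i h => by simp only [h])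
      map_zero' := Quotient.sound (Eventually.of_forall fun i => by simp)
      map_add' := by
        rintro ⟨a⟩ ⟨b⟩
        exact Quotient.sound (Eventually.of_forall fun i => by simp) }
    with hPj
  have hπ1 : ∀ a, Pj (χ a) = a := by
    rintro ⟨v⟩
    exact Quotient.sound (Eventually.of_forall fun i => hπf i (v i))
  have hπm : ∀ (x : UProd 𝒰 Lf) (a : UProd 𝒰 K), Pj (x * χ a) = Pj x * a := by
    rintro ⟨x⟩ ⟨a⟩
    refine Quotient.sound (Eventually.of_forall fun i => ?_)
    show πf i (x i * algebraMap (K i) (Lf i) (a i)) = πf i (x i) * a i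
    rw [mul_comm, ← Algebra.smul_def, map_smul, smul_eq_mul]
    exact mul_comm _ _
  -- non-membership upstairs over Lf
  have hgL : MvPolynomial.map χ g ∉
      (Ideal.span (MvPolynomial.map χ '' (T : Set (MvPolynomial ℕ (UProd 𝒰 K))))).radical := by
    rintro ⟨M, hM⟩
    refine hgT ⟨M, ?_⟩
    rw [← map_pow] at hM
    exact mem_span_of_map_mem_span χ Pj hπ1 hπm _ _ hM
  -- a common zero avoiding g
  have hgL' : MvPolynomial.map χ g ∉
      (Ideal.span ((T.image (MvPolynomial.map χ) : Finset (MvPolynomial ℕ (UProd 𝒰 Lf))) :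
        Set (MvPolynomial ℕ (UProd 𝒰 Lf)))).radical := by
    rwa [Finset.coe_image]
  obtain ⟨p, hp0, hpg⟩ := exists_point (T.image (MvPolynomial.map χ)) (MvPolynomial.map χ g) hgL'
  -- coordinatewise representatives of the point
  set q : ∀ i, ℕ → Lf i := fun i j => Quotient.out (p j) i with hq
  have hqp : (fun j => UProd.mk 𝒰 (fun i => q i j)) = p := funext fun j => UProd.mk_out (p j)
  set E := upEval 𝒰 σ q with hE
  have hcompat : ∀ h : MvPolynomial ℕ (UProd 𝒰 K),
      E (upPolyEmb 𝒰 K h) = MvPolynomial.eval p (MvPolynomial.map χ h) := by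
    intro h
    rw [hE, upEval_upPolyEmb 𝒰 K σ q h, hqp, ← hχ, MvPolynomial.eval_map]
  -- the generators evaluate to zero
  have hyzero : ∀ y ∈ c.support,
      ∀ᶠ i in (𝒰 : Filter ι), MvPolynomial.eval₂ (σ i) (q i) (Quotient.out y i) = 0 := by
    intro y hy
    have h1 : E y = 0 := by
      rw [← hFmap y hy, hcompat]
      refine hp0 _ ?_
      refine Finset.mem_image_of_mem _ ?_
      exact Finset.mem_image_of_mem _ (Finset.mem_attach _ ⟨y, hy⟩)
    have h2 : E (UProd.mk 𝒰 (Quotient.out y)) = 0 := by rwa [UProd.mk_out]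
    rw [hE, upEval_mk, show (0 : UProd 𝒰 Lf) = UProd.mk 𝒰 (fun _ => 0) from rfl,
      UProd.mk_eq_mk] at h2
    exact h2
  have hallzero : ∀ᶠ i in (𝒰 : Filter ι), ∀ y ∈ c.support,
      MvPolynomial.eval₂ (σ i) (q i) (Quotient.out y i) = 0 :=
    (Filter.eventually_all_finset c.support).mpr hyzero
  -- the sum relation, coordinatewise
  set G : ∀ i, MvPolynomial ℕ (K i) := Quotient.out (upPolyEmb 𝒰 K g) with hG
  have hsum2 : ∀ᶠ i in (𝒰 : Filter ι),
      G i ^ N i = ∑ y ∈ c.support, Quotient.out (c y) i * Quotient.out y i := by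
    rw [Finsupp.sum] at hsum
    have hs2 : (∑ y ∈ c.support, c y • y) =
        UProd.mk 𝒰 (fun i => ∑ y ∈ c.support, Quotient.out (c y) i * Quotient.out y i) := by
      rw [← UProd.mk_sum]
      refine Finset.sum_congr rfl fun y hy => ?_
      rw [smul_eq_mul]
      calc c y * y
          = UProd.mk 𝒰 (Quotient.out (c y)) * UProd.mk 𝒰 (Quotient.out y) := by
            rw [UProd.mk_out, UProd.mk_out]
        _ = _ := UProd.mk_mul _ _
    rw [← UProd.mk_eq_mk (𝒰 := 𝒰)]
    rw [← hsum, hs2]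
  -- conclude that g evaluates to zero a.e., contradiction
  have hfinal : ∀ᶠ i in (𝒰 : Filter ι), MvPolynomial.eval₂ (σ i) (q i) (G i) = 0 := by
    refine (hallzero.and hsum2).mono fun i ⟨hz, hs⟩ => ?_
    set e := MvPolynomial.eval₂Hom (σ i) (q i) with he
    have h1 : e (G i) ^ N i = 0 := by
      have h2 := congrArg e hs
      rw [map_pow, map_sum] at h2
      rw [h2]
      refine Finset.sum_eq_zero fun y hy => ?_
      rw [map_mul]
      have h3 : e (Quotient.out y i) = 0 := hz y hy
      rw [h3, mul_zero]
    rcases Nat.eq_zero_or_pos (N i) with h0 | h0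
    · rw [h0, pow_zero] at h1
      exact absurd h1 one_ne_zero
    · exact pow_eq_zero_iff (Nat.pos_iff_ne_zero.mp h0) |>.mp h1
  have hEg : E (upPolyEmb 𝒰 K g) = 0 := by
    conv_lhs => rw [← UProd.mk_out (upPolyEmb 𝒰 K g)]
    rw [hE, upEval_mk]
    rw [show (0 : UProd 𝒰 Lf) = UProd.mk 𝒰 (fun _ => 0) from rfl, UProd.mk_eq_mk]
    exact hfinal
  rw [hcompat] at hEg
  exact hpg hEg
end
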